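/- Let F be the finite field with 16 elements, and let C ⊆ Fˣ be the unique subgroup of order 5 of its multiplicative group. Let G = C ⋉ F be the group on C × F with multiplication (α, x)(β, y) = (αβ, βx + y), a group of order 80. Let Tr : F → F₂ denote the trace map from F to its prime field F₂ (Tr x = x + x² + x⁴ + x⁸). Then the subgroups H₁ = {(α, 0) : α ∈ C}, H₂ = {(α, α − 1) : α ∈ C}, and H₃ = {(1, x) : x ∈ F, Tr x = 0}, of orders 5, 5, and 8 respectively, satisfy the triple product property; hence G realizes ⟨5, 5, 8⟩. -/

import Mathlib

/-- The right quotient set `Q(S) = {s₁s₂⁻¹ : s₁, s₂ ∈ S}` of a subset of a group. -/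
def rightQuotient {G : Type*} [Group G] (S : Set G) : Set G :=
  {g | ∃ s₁ ∈ S, ∃ s₂ ∈ S, g = s₁ * s₂⁻¹}

/-- Subsets `S₁, S₂, S₃` of a group satisfy the triple product property if whenever
`qᵢ ∈ Q(Sᵢ)` and `q₁q₂q₃ = 1`, we have `q₁ = q₂ = q₃ = 1`. -/
def TPP {G : Type*} [Group G] (S₁ S₂ S₃ : Set G) : Prop :=
  ∀ q₁ ∈ rightQuotient S₁, ∀ q₂ ∈ rightQuotient S₂, ∀ q₃ ∈ rightQuotient S₃,
    q₁ * q₂ * q₃ = 1 → q₁ = 1 ∧ q₂ = 1 ∧ q₃ = 1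

/-- A group `G` realizes `⟨n₁, n₂, n₃⟩` if there are finite subsets `Sᵢ ⊆ G` with
`|Sᵢ| = nᵢ` satisfying the triple product property. -/
def Realizes (G : Type*) [Group G] (n₁ n₂ n₃ : ℕ) : Prop :=
  ∃ S₁ S₂ S₃ : Set G, S₁.Finite ∧ S₂.Finite ∧ S₃.Finite ∧
    S₁.ncard = n₁ ∧ S₂.ncard = n₂ ∧ S₃.ncard = n₃ ∧ TPP S₁ S₂ S₃

section Frob

variable {F : Type*} [Field F] (C : Subgroup Fˣ)

/-- Multiplication `(α, x)(β, y) = (αβ, βx + y)` on `C × F`. -/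
def frMul (p q : C × F) : C × F := (p.1 * q.1, ((q.1 : Fˣ) : F) * p.2 + q.2)

/-- Inversion for `frMul`. -/
def frInv (p : C × F) : C × F := (p.1⁻¹, -(((p.1⁻¹ : Fˣ) : F) * p.2))

lemma frMul_assoc (p q r : C × F) : frMul C (frMul C p q) r = frMul C p (frMul C q r) := by
  simp only [frMul, Prod.mk.injEq]
  refine ⟨mul_assoc _ _ _, ?_⟩
  push_cast
  ring

lemma one_frMul (p : C × F) : frMul C (1, 0) p = p := by
  simp [frMul]

lemma frMul_one (p : C × F) : frMul C p (1, 0) = p := by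
  simp [frMul]

lemma frInv_frMul (p : C × F) : frMul C (frInv C p) p = (1, 0) := by
  have h1 : ((p.1 : Fˣ) : F) * (((p.1⁻¹ : C) : Fˣ) : F) = 1 := by
    rw [← Units.val_mul, ← MulMemClass.coe_mul, mul_inv_cancel, OneMemClass.coe_one,
      Units.val_one]
  simp only [frMul, frInv, Prod.mk.injEq]
  refine ⟨inv_mul_cancel _, ?_⟩
  calc ((p.1 : Fˣ) : F) * (-((((p.1⁻¹ : C) : Fˣ) : F) * p.2)) + p.2
      = -((((p.1 : Fˣ) : F) * (((p.1⁻¹ : C) : Fˣ) : F)) * p.2) + p.2 := by ring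
    _ = (1, (0 : F)).2 := by rw [h1]; ring

/-- The semidirect product group `C ⋉ F` with multiplication `(α, x)(β, y) = (αβ, βx + y)`. -/
def frGroup : Group (C × F) where
  mul := frMul C
  one := (1, 0)
  inv := frInv C
  div p q := frMul C p (frInv C q)
  div_eq_mul_inv _ _ := rfl
  mul_assoc := frMul_assoc C
  one_mul := one_frMul C
  mul_one := frMul_one C
  inv_mul_cancel := frInv_frMul C
  npow := @npowRec (C × F) ⟨(1, 0)⟩ ⟨frMul C⟩
  npow_zero _ := rfl
  npow_succ _ _ := rfl
  zpow := @zpowRec (C × F) ⟨(1, 0)⟩ ⟨frMul C⟩ ⟨frInv C⟩ (@npowRec (C × F) ⟨(1, 0)⟩ ⟨frMul C⟩)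
  zpow_zero' _ := rfl
  zpow_succ' _ _ := rfl
  zpow_neg' _ _ := rfl

end Frob

section Aux

/-- Auxiliary: the right quotient set of (the coercion of) a subgroup is the subgroup itself. -/
lemma rightQuotient_subgroup {G : Type*} [Group G] (K : Subgroup G) :
    rightQuotient (K : Set G) = K := by
  ext g
  constructor
  · rintro ⟨s, hs, t, ht, rfl⟩
    exact mul_mem hs (inv_mem ht)
  · intro hg
    exact ⟨g, hg, 1, one_mem K, by simp⟩

/-- Auxiliary: the triple product property for subgroups. -/
lemma tpp_of_subgroups {G : Type*} [Group G] (K₁ K₂ K₃ : Subgroup G)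
    (h : ∀ k₁ ∈ K₁, ∀ k₂ ∈ K₂, ∀ k₃ ∈ K₃, k₁ * k₂ * k₃ = 1 → k₁ = 1 ∧ k₂ = 1 ∧ k₃ = 1) :
    TPP (K₁ : Set G) (K₂ : Set G) (K₃ : Set G) := by
  intro q₁ m₁ q₂ m₂ q₃ m₃ hq
  rw [rightQuotient_subgroup] at m₁ m₂ m₃
  exact h q₁ m₁ q₂ m₂ q₃ m₃ hq

/-- Auxiliary: a nontrivial 5th root of unity is not in the kernel of the trace, shifted. -/
lemma keyA {F : Type*} [Field F] (h2 : (2:F) = 0) (b : F) (h5 : b^5 = 1)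
    (hTr : (1-b) + (1-b)^2 + (1-b)^4 + (1-b)^8 = 0) : b = 1 := by
  by_contra hb
  have hq : b^4+b^3+b^2+b+1 = 0 := by
    rcases mul_eq_zero.mp (show (b-1)*(b^4+b^3+b^2+b+1) = 0 by linear_combination h5) with h | h
    · exact absurd (sub_eq_zero.mp h) hb
    · exact h
  have hTr' : (b-1) + (b-1)^2 + (b-1)^4 + (b-1)^8 = 0 := by
    linear_combination hTr - (1-b)*h2
  exact one_ne_zero (by linear_combination hTr' + b^3*h5 + hq
    - (-4*b^7+14*b^6-28*b^5+35*b^4-30*b^3+17*b^2-7*b+1+b+b^2+b^4+b^8)*h2 : (1:F) = 0)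

/-- Auxiliary: the trace of a nontrivial fifth root of unity is 1. -/
lemma keyB {F : Type*} [Field F] (h2 : (2:F) = 0) (b : F) (h5 : b^5 = 1) (hb : b ≠ 1) :
    b + b^2 + b^4 + b^8 = 1 := by
  have hq : b^4+b^3+b^2+b+1 = 0 := by
    rcases mul_eq_zero.mp (show (b-1)*(b^4+b^3+b^2+b+1) = 0 by linear_combination h5) with h | h
    · exact absurd (sub_eq_zero.mp h) hb
    · exact h
  linear_combination b^3 * h5 + hq - h2

/-- Auxiliary: the kernel of the trace map has 8 elements. -/
lemma ker8 (F : Type*) [Field F] (h2 : (2:F) = 0) (h16 : ∀ x : F, x^16 = x)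
    (hcard : Nat.card F = 16) (b : F) (hb : b + b^2 + b^4 + b^8 = 1) :
    {x : F | x + x^2 + x^4 + x^8 = 0}.ncard = 8 := by
  set φ : F →+ F := AddMonoidHom.mk' (fun x => x + x^2 + x^4 + x^8) (fun x y => by
      linear_combination (x*y + 2*x^3*y+3*x^2*y^2+2*x*y^3 + 4*x^7*y+14*x^6*y^2+28*x^5*y^3
        +35*x^4*y^4+28*x^3*y^5+14*x^2*y^6+4*x*y^7)*h2) with hφ
  have hφx : ∀ x : F, φ x = x + x^2 + x^4 + x^8 := fun x => rfl
  have hrange : (φ.range : Set F) = {0, 1} := by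
    ext y
    simp only [AddMonoidHom.coe_range, Set.mem_range, Set.mem_insert_iff, Set.mem_singleton_iff]
    constructor
    · rintro ⟨x, rfl⟩
      have : (φ x) * (φ x - 1) = 0 := by
        rw [hφx]
        linear_combination h16 x + (x^3+x^5+x^6+x^9+x^10+x^12)*h2
      rcases mul_eq_zero.mp this with h | h
      · left; exact h
      · right; exact sub_eq_zero.mp h
    · rintro (rfl | rfl)
      · exact ⟨0, by rw [hφx]; ring⟩
      · exact ⟨b, by rw [hφx, hb]⟩
  have hker : {x : F | x + x^2 + x^4 + x^8 = 0} = (φ.ker : Set F) := by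
    ext x; simp [AddMonoidHom.mem_ker, hφx]
  have hcr : Nat.card φ.range = 2 := by
    have h := Nat.card_congr (Equiv.setCongr hrange)
    simp only [Nat.card_coe_set_eq, Set.ncard_pair zero_ne_one] at h
    exact h
  have hq : Nat.card (F ⧸ φ.ker) = 2 := by
    rw [Nat.card_congr (QuotientAddGroup.quotientKerEquivRange φ).toEquiv, hcr]
  have hm := AddSubgroup.card_eq_card_quotient_mul_card_addSubgroup φ.ker
  rw [hcard, hq] at hm
  have hk : Nat.card φ.ker = 8 := by omega
  rw [hker, ← Nat.card_coe_set_eq]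
  exact hk

variable {F : Type*} [Field F] (C : Subgroup Fˣ)

/-- Auxiliary: constructor for subgroups of `frGroup`. -/
def mkSub (S : Set (C × F))
    (hmul : ∀ {a b : C × F}, a ∈ S → b ∈ S → frMul C a b ∈ S)
    (hone : ((1 : C), (0 : F)) ∈ S)
    (hinv : ∀ {a : C × F}, a ∈ S → frInv C a ∈ S) : @Subgroup (C × F) (frGroup C) :=
  @Subgroup.mk _ (frGroup C)
    (@Submonoid.mk _
      (@Monoid.toMulOneClass _ (@DivInvMonoid.toMonoid _ (@Group.toDivInvMonoid _ (frGroup C))))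
      (@Subsemigroup.mk _
        (@MulOne.toMul _ (@MulOneClass.toMulOne _
          (@Monoid.toMulOneClass _ (@DivInvMonoid.toMonoid _
            (@Group.toDivInvMonoid _ (frGroup C)))))) S hmul) hone)
    hinv

/-- The first subgroup `{(α, 0)}`. -/
def K1 : @Subgroup (C × F) (frGroup C) := by
  refine mkSub C {p : C × F | ∃ α : C, p = (α, 0)} ?_ ⟨1, rfl⟩ ?_
  · rintro p q ⟨a, rfl⟩ ⟨b, rfl⟩
    exact ⟨a * b, by simp [frMul]⟩
  · rintro p ⟨a, rfl⟩
    exact ⟨a⁻¹, by simp [frInv]⟩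

/-- The second subgroup `{(α, α - 1)}`. -/
def K2 : @Subgroup (C × F) (frGroup C) := by
  refine mkSub C {p : C × F | ∃ α : C, p = (α, ((α : Fˣ) : F) - 1)} ?_ ⟨1, by simp⟩ ?_
  · rintro p q ⟨a, rfl⟩ ⟨b, rfl⟩
    refine ⟨a * b, ?_⟩
    simp only [frMul, Prod.mk.injEq, true_and]
    push_cast
    ring
  · rintro p ⟨a, rfl⟩
    refine ⟨a⁻¹, ?_⟩
    have ha : ((a : Fˣ) : F) ≠ 0 := Units.ne_zero _
    simp only [frInv, Prod.mk.injEq, true_and]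
    push_cast
    field_simp
    ring

/-- The third subgroup `{(1, x) : Tr x = 0}`. -/
def K3 (h2 : (2:F) = 0) : @Subgroup (C × F) (frGroup C) := by
  refine mkSub C {p : C × F | ∃ x : F, x + x ^ 2 + x ^ 4 + x ^ 8 = 0 ∧ p = (1, x)}
    ?_ ⟨0, by ring, rfl⟩ ?_
  · rintro p q ⟨x, hx, rfl⟩ ⟨y, hy, rfl⟩
    refine ⟨x + y, ?_, ?_⟩
    · linear_combination hx + hy + (x*y + 2*x^3*y+3*x^2*y^2+2*x*y^3 + 4*x^7*y+14*x^6*y^2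
        +28*x^5*y^3+35*x^4*y^4+28*x^3*y^5+14*x^2*y^6+4*x*y^7)*h2
    · simp [frMul]
  · rintro p ⟨x, hx, rfl⟩
    refine ⟨-x, ?_, ?_⟩
    · linear_combination hx - x*h2
    · simp [frInv]

end Aux

theorem stmt_12 (F : Type*) [Field F] [Fintype F] (hF : Fintype.card F = 16)
    (C : Subgroup Fˣ) (hC : Nat.card C = 5)
    (hCuniq : ∀ C' : Subgroup Fˣ, Nat.card C' = 5 → C' = C) :
    Nat.card (C × F) = 80 ∧
    {p : C × F | ∃ α : C, p = (α, 0)}.ncard = 5 ∧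
    {p : C × F | ∃ α : C, p = (α, ((α : Fˣ) : F) - 1)}.ncard = 5 ∧
    {p : C × F | ∃ x : F, x + x ^ 2 + x ^ 4 + x ^ 8 = 0 ∧ p = (1, x)}.ncard = 8 ∧
    (∃ K₁ K₂ K₃ : @Subgroup (C × F) (frGroup C),
      (K₁ : Set (C × F)) = {p : C × F | ∃ α : C, p = (α, 0)} ∧
      (K₂ : Set (C × F)) = {p : C × F | ∃ α : C, p = (α, ((α : Fˣ) : F) - 1)} ∧
      (K₃ : Set (C × F)) = {p : C × F | ∃ x : F, x + x ^ 2 + x ^ 4 + x ^ 8 = 0 ∧ p = (1, x)}) ∧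
    @TPP (C × F) (frGroup C)
      {p : C × F | ∃ α : C, p = (α, 0)}
      {p : C × F | ∃ α : C, p = (α, ((α : Fˣ) : F) - 1)}
      {p : C × F | ∃ x : F, x + x ^ 2 + x ^ 4 + x ^ 8 = 0 ∧ p = (1, x)} ∧
    @Realizes (C × F) (frGroup C) 5 5 8 := by
  -- basic facts about F
  have h2 : (2:F) = 0 := by
    have h16' : (16 : F) = 0 := by
      have := FiniteField.cast_card_eq_zero F
      rwa [hF] at this
    have hp : (ringChar F).Prime := CharP.char_is_prime F (ringChar F)
    have hdvd : ringChar F ∣ 16 := (ringChar.spec F 16).mp (by exact_mod_cast h16')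
    have hc2 : ringChar F = 2 := by
      have hd2 := hp.dvd_of_dvd_pow (show ringChar F ∣ 2^4 by norm_num; exact hdvd)
      exact (Nat.prime_dvd_prime_iff_eq hp Nat.prime_two).mp hd2
    have := ringChar.spec F 2
    rw [hc2] at this
    exact_mod_cast this.mpr dvd_rfl
  have h16 : ∀ x : F, x^16 = x := by
    intro x
    have := FiniteField.pow_card x
    rwa [hF] at this
  have hcF : Nat.card F = 16 := by rw [Nat.card_eq_fintype_card, hF]
  haveI : Finite C := Nat.finite_of_card_ne_zero (by omega)
  -- fifth power of elements of C
  have hpow : ∀ β : C, ((β : Fˣ) : F)^5 = 1 := by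
    intro β
    have h : β ^ 5 = 1 := by rw [← hC]; exact pow_card_eq_one'
    have h' : (((β ^ 5 : C) : Fˣ) : F) = 1 := by rw [h]; simp
    push_cast at h'
    exact h'
  -- a nontrivial element of C with trace 1
  obtain ⟨β₀, hβ₀⟩ : ∃ β : C, β ≠ 1 := by
    by_contra h
    push_neg at h
    have : Nat.card C = 1 := Nat.card_eq_one_iff_unique.mpr
      ⟨⟨fun a b => by rw [h a, h b]⟩, ⟨1⟩⟩
    omega
  have hb₀ne : ((β₀ : Fˣ) : F) ≠ 1 := by
    intro h
    exact hβ₀ (Subtype.ext (Units.ext (by simpa using h)))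
  have hb₀tr : ((β₀ : Fˣ) : F) + ((β₀ : Fˣ) : F)^2 + ((β₀ : Fˣ) : F)^4 + ((β₀ : Fˣ) : F)^8 = 1 :=
    keyB h2 _ (hpow β₀) hb₀ne
  -- cardinalities of the three sets
  have hn1 : {p : C × F | ∃ α : C, p = (α, 0)}.ncard = 5 := by
    have he : {p : C × F | ∃ α : C, p = (α, 0)} =
        (fun α : C => ((α, 0) : C × F)) '' Set.univ := by
      rw [Set.image_univ]
      ext p
      simp only [Set.mem_setOf_eq, Set.mem_range]
      exact ⟨fun ⟨a, h⟩ => ⟨a, h.symm⟩, fun ⟨a, h⟩ => ⟨a, h.symm⟩⟩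
    rw [he, Set.ncard_image_of_injective _ (fun a b h => by simpa using congrArg Prod.fst h),
      Set.ncard_univ, hC]
  have hn2 : {p : C × F | ∃ α : C, p = (α, ((α : Fˣ) : F) - 1)}.ncard = 5 := by
    have he : {p : C × F | ∃ α : C, p = (α, ((α : Fˣ) : F) - 1)} =
        (fun α : C => ((α, ((α : Fˣ) : F) - 1) : C × F)) '' Set.univ := by
      rw [Set.image_univ]
      ext p
      simp only [Set.mem_setOf_eq, Set.mem_range]
      exact ⟨fun ⟨a, h⟩ => ⟨a, h.symm⟩, fun ⟨a, h⟩ => ⟨a, h.symm⟩⟩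
    rw [he, Set.ncard_image_of_injective _ (fun a b h => by simpa using congrArg Prod.fst h),
      Set.ncard_univ, hC]
  have hn3 : {p : C × F | ∃ x : F, x + x ^ 2 + x ^ 4 + x ^ 8 = 0 ∧ p = (1, x)}.ncard = 8 := by
    have he : {p : C × F | ∃ x : F, x + x ^ 2 + x ^ 4 + x ^ 8 = 0 ∧ p = (1, x)} =
        (fun x : F => (((1 : C), x) : C × F)) '' {x : F | x + x^2 + x^4 + x^8 = 0} := by
      ext p
      simp only [Set.mem_setOf_eq, Set.mem_image]
      exact ⟨fun ⟨x, hx, h⟩ => ⟨x, hx, h.symm⟩, fun ⟨x, hx, h⟩ => ⟨x, hx, h.symm⟩⟩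
    rw [he, Set.ncard_image_of_injective _ (fun a b h => by simpa using congrArg Prod.snd h)]
    exact ker8 F h2 h16 hcF _ hb₀tr
  -- carrier identifications
  have hK1 : ((K1 C : @Subgroup (C × F) (frGroup C)) : Set (C × F)) =
      {p : C × F | ∃ α : C, p = (α, 0)} := rfl
  have hK2 : ((K2 C : @Subgroup (C × F) (frGroup C)) : Set (C × F)) =
      {p : C × F | ∃ α : C, p = (α, ((α : Fˣ) : F) - 1)} := rfl
  have hK3 : ((K3 C h2 : @Subgroup (C × F) (frGroup C)) : Set (C × F)) =
      {p : C × F | ∃ x : F, x + x ^ 2 + x ^ 4 + x ^ 8 = 0 ∧ p = (1, x)} := rfl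
  -- the triple product property
  have hTPP : @TPP (C × F) (frGroup C)
      {p : C × F | ∃ α : C, p = (α, 0)}
      {p : C × F | ∃ α : C, p = (α, ((α : Fˣ) : F) - 1)}
      {p : C × F | ∃ x : F, x + x ^ 2 + x ^ 4 + x ^ 8 = 0 ∧ p = (1, x)} := by
    rw [← hK1, ← hK2, ← hK3]
    refine @tpp_of_subgroups _ (frGroup C) _ _ _ ?_
    intro k₁ m₁ k₂ m₂ k₃ m₃ hprod
    obtain ⟨α, rfl⟩ : ∃ α : C, k₁ = (α, 0) := m₁
    obtain ⟨β, rfl⟩ : ∃ α : C, k₂ = (α, ((α : Fˣ) : F) - 1) := m₂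
    obtain ⟨x, hx, rfl⟩ : ∃ x : F, x + x ^ 2 + x ^ 4 + x ^ 8 = 0 ∧ k₃ = (1, x) := m₃
    have hp : frMul C (frMul C (α, 0) (β, ((β : Fˣ) : F) - 1)) ((1 : C), x)
        = ((1 : C), (0 : F)) := hprod
    simp only [frMul, Prod.mk.injEq, mul_zero, zero_add, OneMemClass.coe_one, Units.val_one,
      one_mul, mul_one] at hp
    obtain ⟨hA, hB⟩ := hp
    -- from hB : ↑↑β - 1 + x = 0, get x = 1 - ↑↑β
    have hxval : x = 1 - ((β : Fˣ) : F) := by linear_combination hB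
    rw [hxval] at hx
    have hbeta : ((β : Fˣ) : F) = 1 := keyA h2 _ (hpow β) hx
    have hβ1 : β = 1 := Subtype.ext (Units.ext (by simpa using hbeta))
    subst hβ1
    have hα1 : α = 1 := by simpa using hA
    subst hα1
    have hx0 : x = 0 := by rw [hxval]; simp
    subst hx0
    refine ⟨rfl, ?_, rfl⟩
    show ((1 : C), ((1 : Fˣ) : F) - 1) = ((1 : C), (0 : F))
    simp
  refine ⟨by rw [Nat.card_prod, hC, hcF], hn1, hn2, hn3,
    ⟨K1 C, K2 C, K3 C h2, hK1, hK2, hK3⟩, hTPP, ?_⟩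
  exact ⟨_, _, _, Set.toFinite _, Set.toFinite _, Set.toFinite _, hn1, hn2, hn3, hTPP⟩
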